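/- (Least Action Principle for abelian stacks) Suppose u_* : V → ℕ has finite support A_*, and the configuration σ_* = σ_0 + Δ_ρ u_* satisfies σ_*(x) ≤ 1 for all x. Then there exists a finite complete legal firing sequence for σ_0, and its odometer function u satisfies u ≤ u_*. -/

import Mathlib

open scoped BigOperators

open Classical in
/-- Number of occurrences of the edge `e` among the rotors `ρ_1(s e), …, ρ_n(s e)`. -/
noncomputable def Rcount {V E : Type*} (src : E → V) (ρ : V → ℕ → E) (e : E) (n : ℕ) : ℕ :=
  ((Finset.Icc 1 n).filter fun k => ρ (src e) k = e).card

open Classical in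
/-- The stack Laplacian `Δ_ρ u (x) = Σ_{t(e)=x} R_ρ(e, u(s e)) − u x`. -/
noncomputable def stackLap {V E : Type*} (src tgt : E → V) (ρ : V → ℕ → E)
    (u : V → ℕ) (x : V) : ℤ :=
  (∑ᶠ e : E, if tgt e = x then (Rcount src ρ e (u (src e)) : ℤ) else 0) - u x

/-- The number of times each vertex occurs in a firing sequence. -/
def fireCnt {V : Type*} [DecidableEq V] (seq : List V) : V → ℕ :=
  fun x => seq.count x

/-- `seq` is a legal firing sequence for `σ0`: each fired vertex has more than one chip
at the moment it is fired. -/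
def IsLegalSeq {V E : Type*} [DecidableEq V] (src tgt : E → V) (ρ : V → ℕ → E)
    (σ0 : V → ℤ) (seq : List V) : Prop :=
  ∀ j : Fin seq.length,
    1 < σ0 (seq.get j) + stackLap src tgt ρ (fireCnt (seq.take j)) (seq.get j)

/-- `seq` is a complete firing sequence for `σ0`: afterwards no vertex has more than
one chip. -/
def IsCompleteSeq {V E : Type*} [DecidableEq V] (src tgt : E → V) (ρ : V → ℕ → E)
    (σ0 : V → ℤ) (seq : List V) : Prop :=
  ∀ x : V, σ0 x + stackLap src tgt ρ (fireCnt seq) x ≤ 1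

/-- A rotor configuration `r` is acyclic on `A`: every nonempty finite subset of `A`
contains a vertex whose rotor points outside the subset. -/
def AcyclicOn {V E : Type*} (tgt : E → V) (r : V → E) (A : Set V) : Prop :=
  ∀ A' ⊆ A, A'.Finite → A'.Nonempty → ∃ x ∈ A', tgt (r x) ∉ A'

open Classical

section Aux
variable {V E : Type*}

lemma Rcount_mono (src : E → V) (ρ : V → ℕ → E) (e : E) {m n : ℕ} (h : m ≤ n) :
    Rcount src ρ e m ≤ Rcount src ρ e n := by
  unfold Rcount
  exact Finset.card_le_card
    (Finset.filter_subset_filter _ (Finset.Icc_subset_Icc_right h))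

/-- The union of rotor images, containing the support of the Laplacian summand. -/
def rotorSet (ρ : V → ℕ → E) (u : V → ℕ) : Set E :=
  ⋃ y ∈ Function.support u, (fun k => ρ y k) '' Set.Icc 1 (u y)

lemma rotorSet_finite (ρ : V → ℕ → E) (u : V → ℕ) (hu : (Function.support u).Finite) :
    (rotorSet ρ u).Finite :=
  hu.biUnion fun y _ => (Set.finite_Icc 1 (u y)).image _

lemma support_term_subset (src tgt : E → V) (ρ : V → ℕ → E) (u : V → ℕ) (x : V) :
    (Function.support fun e => if tgt e = x then (Rcount src ρ e (u (src e)) : ℤ) else 0)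
      ⊆ rotorSet ρ u := by
  intro e he
  simp only [Function.mem_support] at he
  by_cases h : tgt e = x
  · simp only [h, if_true] at he
    have hne : ((Finset.Icc 1 (u (src e))).filter fun k => ρ (src e) k = e).Nonempty := by
      rw [Finset.nonempty_iff_ne_empty]
      intro hemp
      apply he
      simp [Rcount, hemp]
    obtain ⟨k, hk⟩ := hne
    simp only [Finset.mem_filter, Finset.mem_Icc] at hk
    have hy : src e ∈ Function.support u := by
      simp only [Function.mem_support]
      omega
    exact Set.mem_biUnion hy ⟨k, ⟨hk.1.1, hk.1.2⟩, hk.2⟩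
  · simp [h] at he

lemma rotorSet_mono (ρ : V → ℕ → E) {u v : V → ℕ} (huv : ∀ y, u y ≤ v y) :
    rotorSet ρ u ⊆ rotorSet ρ v := by
  apply Set.iUnion₂_subset
  intro y hy
  have hy' : y ∈ Function.support v := by
    simp only [Function.mem_support] at hy ⊢
    have := huv y; omega
  intro e he
  obtain ⟨k, hk, rfl⟩ := he
  exact Set.mem_biUnion hy' ⟨k, ⟨hk.1, hk.2.trans (huv y)⟩, rfl⟩

lemma stackLap_mono (src tgt : E → V) (ρ : V → ℕ → E)
    {u v : V → ℕ} (hv : (Function.support v).Finite)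
    (huv : ∀ y, u y ≤ v y) (x : V) (hx : u x = v x) :
    stackLap src tgt ρ u x ≤ stackLap src tgt ρ v x := by
  unfold stackLap
  rw [hx]
  apply sub_le_sub_right
  have hSfin : (rotorSet ρ v).Finite := rotorSet_finite ρ v hv
  set s : Finset E := hSfin.toFinset with hs
  have hsubv : (Function.support fun e =>
      if tgt e = x then (Rcount src ρ e (v (src e)) : ℤ) else 0) ⊆ (s : Set E) := by
    rw [hs]; simpa using support_term_subset src tgt ρ v x
  have hsubu : (Function.support fun e =>
      if tgt e = x then (Rcount src ρ e (u (src e)) : ℤ) else 0) ⊆ (s : Set E) := by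
    rw [hs]
    simp only [Set.Finite.coe_toFinset]
    exact (support_term_subset src tgt ρ u x).trans (rotorSet_mono ρ huv)
  rw [finsum_eq_sum_of_support_subset _ hsubu, finsum_eq_sum_of_support_subset _ hsubv]
  apply Finset.sum_le_sum
  intro e _
  by_cases h : tgt e = x
  · simp only [h, if_true]
    exact_mod_cast Rcount_mono src ρ e (huv (src e))
  · simp [h]

lemma fireCnt_support_finite [DecidableEq V] (seq : List V) :
    (Function.support (fireCnt seq)).Finite := by
  apply Set.Finite.subset seq.toFinset.finite_toSet
  intro x hx
  simp only [Function.mem_support, fireCnt] at hx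
  simp only [Finset.coe_sort_coe, List.mem_toFinset, Finset.mem_coe]
  exact List.count_pos_iff.mp (Nat.pos_of_ne_zero hx)

/-- Core bound: any legal firing sequence fires each vertex at most `ustar` times. -/
lemma legal_bound [DecidableEq V] (src tgt : E → V) (ρ : V → ℕ → E)
    (σ0 : V → ℤ) (ustar : V → ℕ) (hustar : (Function.support ustar).Finite)
    (hle : ∀ x, σ0 x + stackLap src tgt ρ ustar x ≤ 1)
    (seq : List V) (hleg : IsLegalSeq src tgt ρ σ0 seq) :
    ∀ x, fireCnt seq x ≤ ustar x := by
  suffices h : ∀ j, ∀ x, fireCnt (seq.take j) x ≤ ustar x by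
    have := h seq.length
    simpa [List.take_of_length_le le_rfl] using this
  intro j
  induction j with
  | zero => intro x; simp [fireCnt]
  | succ j ih =>
    by_cases hj : j < seq.length
    · set y := seq.get ⟨j, hj⟩ with hydef
      have hlt : fireCnt (seq.take j) y < ustar y := by
        by_contra hge
        have heq : fireCnt (seq.take j) y = ustar y :=
          le_antisymm (ih y) (not_lt.mp hge)
        have hmono := stackLap_mono src tgt ρ hustar ih y heq
        have hl := hleg ⟨j, hj⟩
        have := hle y
        simp only [← hydef] at hl
        omega
      have htake : seq.take (j+1) = seq.take j ++ [y] := by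
        rw [List.take_succ, List.getElem?_eq_getElem hj]
        rfl
      intro x
      rw [htake]
      simp only [fireCnt, List.count_append]
      rcases eq_or_ne x y with h | hxy
      · rw [h]
        have h1 : List.count y [y] = 1 := by simp
        rw [h1]
        exact hlt
      · have h0 : List.count x [y] = 0 := List.count_eq_zero.mpr (by simp [hxy])
        rw [h0]
        simpa [fireCnt] using ih x
    · have h1 : seq.take (j+1) = seq := List.take_of_length_le (by omega)
      have h2 : seq.take j = seq := List.take_of_length_le (by omega)
      intro x
      have := ih x
      rw [h2] at this
      rwa [h1]

lemma legal_length_bound [DecidableEq V] (src tgt : E → V) (ρ : V → ℕ → E)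
    (σ0 : V → ℤ) (ustar : V → ℕ) (hustar : (Function.support ustar).Finite)
    (hle : ∀ x, σ0 x + stackLap src tgt ρ ustar x ≤ 1)
    (seq : List V) (hleg : IsLegalSeq src tgt ρ σ0 seq) :
    seq.length ≤ ∑ x ∈ hustar.toFinset, ustar x := by
  have hb := legal_bound src tgt ρ σ0 ustar hustar hle seq hleg
  calc seq.length = ∑ a ∈ seq.toFinset, seq.count a :=
        (List.sum_toFinset_count_eq_length seq).symm
    _ ≤ ∑ a ∈ seq.toFinset, ustar a := Finset.sum_le_sum fun a _ => hb a
    _ ≤ ∑ x ∈ hustar.toFinset, ustar x := by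
        rw [← Finset.sum_filter_ne_zero seq.toFinset]
        apply Finset.sum_le_sum_of_subset
        intro a ha
        simp only [Finset.mem_filter] at ha
        simp [Set.Finite.mem_toFinset, Function.mem_support, ha.2]

end Aux

/-- Least Action Principle: if `u_*` is finitely supported and
`σ_* = σ_0 + Δ_ρ u_* ≤ 1`, then there exists a finite complete legal firing sequence
for `σ_0`, and the odometer of any such sequence is at most `u_*`. -/
theorem least_action_principle {V E : Type*} [DecidableEq V]
    (src tgt : E → V) (ρ : V → ℕ → E)
    (hsrc : ∀ x k, src (ρ x k) = x)
    (hloc : ∀ x : V, {e : E | tgt e = x}.Finite)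
    (hconn : ∀ x y : V, Relation.ReflTransGen (fun a b => ∃ e, src e = a ∧ tgt e = b) x y)
    (σ0 : V → ℤ) (hσ0 : (Function.support σ0).Finite)
    (ustar : V → ℕ) (hustar : (Function.support ustar).Finite)
    (hle : ∀ x, σ0 x + stackLap src tgt ρ ustar x ≤ 1) :
    (∃ seq : List V, IsLegalSeq src tgt ρ σ0 seq ∧ IsCompleteSeq src tgt ρ σ0 seq) ∧
    ∀ seq : List V, IsLegalSeq src tgt ρ σ0 seq → IsCompleteSeq src tgt ρ σ0 seq →
      ∀ x, fireCnt seq x ≤ ustar x := by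
  classical
  refine ⟨?_, fun seq hl _ => legal_bound src tgt ρ σ0 ustar hustar hle seq hl⟩
  set N := ∑ x ∈ hustar.toFinset, ustar x with hN
  set P : ℕ → Prop := fun n => ∃ seq : List V, IsLegalSeq src tgt ρ σ0 seq ∧ seq.length = n
    with hPdef
  have hP0 : P 0 := ⟨[], fun j => j.elim0, rfl⟩
  have hPle : ∀ n, P n → n ≤ N := by
    rintro n ⟨seq, hl, rfl⟩
    exact legal_length_bound src tgt ρ σ0 ustar hustar hle seq hl
  obtain ⟨seq, hl, hlen⟩ := Nat.findGreatest_spec (P := P) (Nat.zero_le N) hP0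
  refine ⟨seq, hl, ?_⟩
  by_contra hnc
  unfold IsCompleteSeq at hnc
  push_neg at hnc
  obtain ⟨x, hx⟩ := hnc
  have hl' : IsLegalSeq src tgt ρ σ0 (seq ++ [x]) := by
    intro j
    have hj2 : (j : ℕ) < seq.length + 1 := by simpa using j.isLt
    rcases Nat.lt_or_ge (j : ℕ) seq.length with hlt | hge
    · have hget : (seq ++ [x]).get j = seq.get ⟨j, hlt⟩ := by
        rw [List.get_eq_getElem, List.get_eq_getElem]
        exact List.getElem_append_left hlt
      have htake : (seq ++ [x]).take j = seq.take j :=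
        List.take_append_of_le_length (le_of_lt hlt)
      rw [hget, htake]
      exact hl ⟨j, hlt⟩
    · have hj : (j : ℕ) = seq.length := by omega
      have hget : (seq ++ [x]).get j = x := by
        rw [List.get_eq_getElem]
        exact List.getElem_concat_length hj _
      have htake : (seq ++ [x]).take j = seq := by
        rw [hj, List.take_append_of_le_length le_rfl, List.take_of_length_le le_rfl]
      rw [hget, htake]
      exact hx
  have hP' : P (seq.length + 1) := ⟨seq ++ [x], hl', by simp⟩
  have hle' : seq.length + 1 ≤ N := hPle _ hP'
  exact Nat.findGreatest_is_greatest (by omega) hle' hP'
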